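/- For every b > 1 and every ε ∈ (0, 1/2), the integral I(ε; b) = ∫₁^∞ (1 − e^{−εt}) / (√(1+t²)(ε²t² + b²)) dt satisfies |I(ε;b) − C₀(b)| ≤ C ε (1 + |log ε|) / b², where C₀(b) = ∫₀^∞ (1 − e^{−t})/(t(t² + b²)) dt and C is an absolute constant independent of b and ε. -/

import Mathlib

open Real MeasureTheory Set

/-- `1 - exp(-s) ≤ s` for all real `s`. -/
lemma one_sub_exp_neg_le (s : ℝ) : 1 - Real.exp (-s) ≤ s := by
  have := Real.add_one_le_exp (-s)
  linarith

lemma one_sub_exp_neg_nonneg {s : ℝ} (hs : 0 ≤ s) : 0 ≤ 1 - Real.exp (-s) := by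
  have : Real.exp (-s) ≤ Real.exp 0 := Real.exp_le_exp.mpr (by linarith)
  simpa using this

set_option maxHeartbeats 1000000 in
/-- For `b > 1` and `ε ∈ (0, 1/2)`,
`I(ε;b) = ∫₁^∞ (1 - e^{-εt})/(√(1+t²)(ε²t² + b²)) dt` satisfies
`|I(ε;b) - C₀(b)| ≤ C ε (1 + |log ε|)/b²` for an absolute constant `C`,
where `C₀(b) = ∫₀^∞ (1 - e^{-t})/(t(t² + b²)) dt`. -/
theorem stmt_9 :
    ∃ C : ℝ, 0 < C ∧ ∀ b : ℝ, 1 < b → ∀ ε : ℝ, 0 < ε → ε < 1 / 2 →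
      |(∫ t in Ioi (1 : ℝ),
          (1 - Real.exp (-(ε * t))) / (Real.sqrt (1 + t ^ 2) * (ε ^ 2 * t ^ 2 + b ^ 2))) -
        ∫ t in Ioi (0 : ℝ), (1 - Real.exp (-t)) / (t * (t ^ 2 + b ^ 2))| ≤
      C * ε * (1 + |Real.log ε|) / b ^ 2 := by
  refine ⟨2, by norm_num, fun b hb ε hε hε2 => ?_⟩
  have hb0 : (0:ℝ) < b := by linarith
  have hb2 : (0:ℝ) < b ^ 2 := by positivity
  set f : ℝ → ℝ := fun s => (1 - Real.exp (-s)) / (s * (s ^ 2 + b ^ 2)) with hf_def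
  set g : ℝ → ℝ := fun s => (1 - Real.exp (-s)) / (Real.sqrt (ε ^ 2 + s ^ 2) * (s ^ 2 + b ^ 2))
    with hg_def
  -- Step 1 : substitution t ↦ ε t
  have hsub : (∫ t in Ioi (1 : ℝ),
      (1 - Real.exp (-(ε * t))) / (Real.sqrt (1 + t ^ 2) * (ε ^ 2 * t ^ 2 + b ^ 2)))
      = ∫ s in Ioi ε, g s := by
    have h1 : ∀ t : ℝ,
        (1 - Real.exp (-(ε * t))) / (Real.sqrt (1 + t ^ 2) * (ε ^ 2 * t ^ 2 + b ^ 2))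
        = ε • g (ε * t) := by
      intro t
      have hsq : Real.sqrt (ε ^ 2 + (ε * t) ^ 2) = ε * Real.sqrt (1 + t ^ 2) := by
        rw [show ε ^ 2 + (ε * t) ^ 2 = ε ^ 2 * (1 + t ^ 2) by ring,
          Real.sqrt_mul (sq_nonneg ε), Real.sqrt_sq hε.le]
      have hst : (0:ℝ) < Real.sqrt (1 + t ^ 2) := Real.sqrt_pos.mpr (by positivity)
      have hden : (0:ℝ) < ε ^ 2 * t ^ 2 + b ^ 2 := by positivity
      simp only [hg_def, smul_eq_mul, hsq]
      rw [show (ε * t) ^ 2 = ε ^ 2 * t ^ 2 by ring]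
      field_simp
    simp_rw [h1]
    rw [integral_smul, integral_comp_mul_left_Ioi g 1 hε, mul_one, smul_smul,
      mul_inv_cancel₀ hε.ne', one_smul]
  -- basic pointwise facts
  have hg_le_f : ∀ s : ℝ, 0 < s → g s ≤ f s := by
    intro s hs
    have hQ : s ≤ Real.sqrt (ε ^ 2 + s ^ 2) := by
      have h := Real.sqrt_le_sqrt (show s ^ 2 ≤ ε ^ 2 + s ^ 2 by nlinarith)
      rwa [Real.sqrt_sq hs.le] at h
    apply div_le_div_of_nonneg_left (one_sub_exp_neg_nonneg hs.le) (by positivity)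
    have : 0 < s ^ 2 + b ^ 2 := by positivity
    nlinarith
  have hf_nonneg : ∀ s : ℝ, 0 < s → 0 ≤ f s := fun s hs =>
    div_nonneg (one_sub_exp_neg_nonneg hs.le) (by positivity)
  have hg_nonneg : ∀ s : ℝ, 0 < s → 0 ≤ g s := fun s hs =>
    div_nonneg (one_sub_exp_neg_nonneg hs.le) (by positivity)
  have hf_le : ∀ s : ℝ, 0 < s → f s ≤ s ^ (-2 : ℝ) := by
    intro s hs
    have h1 : f s ≤ 1 / (s ^ 2 + b ^ 2) := by
      rw [hf_def]
      rw [div_le_div_iff₀ (by positivity) (by positivity)]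
      have := one_sub_exp_neg_le s
      nlinarith
    have h2 : (1 : ℝ) / (s ^ 2 + b ^ 2) ≤ s ^ (-2 : ℝ) := by
      rw [Real.rpow_neg hs.le, show (2:ℝ) = ((2:ℕ):ℝ) by norm_num, Real.rpow_natCast]
      rw [div_le_iff₀ (by positivity)]
      rw [inv_mul_eq_div, le_div_iff₀ (by positivity)]
      nlinarith
    linarith
  -- measurability
  have hf_meas : Measurable f := by fun_prop
  have hg_meas : Measurable g := by fun_prop
  -- integrability
  have hdom : IntegrableOn (fun s : ℝ => s ^ (-2 : ℝ)) (Ioi ε) :=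
    integrableOn_Ioi_rpow_of_lt (by norm_num) hε
  have hf_int : IntegrableOn f (Ioi ε) := by
    refine Integrable.mono' hdom hf_meas.aestronglyMeasurable ?_
    filter_upwards [ae_restrict_mem measurableSet_Ioi] with s hs
    have hs0 : 0 < s := hε.trans hs
    rw [Real.norm_eq_abs, abs_of_nonneg (hf_nonneg s hs0)]
    exact hf_le s hs0
  have hg_int : IntegrableOn g (Ioi ε) := by
    refine Integrable.mono' hdom hg_meas.aestronglyMeasurable ?_
    filter_upwards [ae_restrict_mem measurableSet_Ioi] with s hs
    have hs0 : 0 < s := hε.trans hs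
    rw [Real.norm_eq_abs, abs_of_nonneg (hg_nonneg s hs0)]
    exact (hg_le_f s hs0).trans (hf_le s hs0)
  have hf_int0 : IntegrableOn f (Ioc 0 ε) := by
    apply Measure.integrableOn_of_bounded (M := 1)
    · exact ((measure_Ioc_lt_top)).ne
    · exact hf_meas.aestronglyMeasurable
    · filter_upwards [ae_restrict_mem measurableSet_Ioc] with s hs
      have hs0 : 0 < s := hs.1
      rw [Real.norm_eq_abs, abs_of_nonneg (hf_nonneg s hs0)]
      have := hf_le s hs0
      have h1 : f s ≤ 1 / (s ^ 2 + b ^ 2) := by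
        rw [hf_def, div_le_div_iff₀ (by positivity) (by positivity)]
        have := one_sub_exp_neg_le s
        nlinarith
      have h2 : (1:ℝ) / (s ^ 2 + b ^ 2) ≤ 1 := by
        rw [div_le_one (by positivity)]; nlinarith
      linarith
  -- split C₀
  have hsplit : (∫ s in Ioi (0:ℝ), f s) = (∫ s in Ioc 0 ε, f s) + ∫ s in Ioi ε, f s := by
    rw [← setIntegral_union (Ioc_disjoint_Ioi le_rfl) measurableSet_Ioi hf_int0 hf_int,
      Ioc_union_Ioi_eq_Ioi hε.le]
  -- bound on the Ioc piece
  have hIoc : |∫ s in Ioc 0 ε, f s| ≤ ε / b ^ 2 := by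
    have := MeasureTheory.norm_setIntegral_le_of_norm_le_const (μ := volume) (s := Ioc 0 ε) (f := f)
      (C := 1 / b ^ 2) (by exact measure_Ioc_lt_top) ?_
    · rw [Real.norm_eq_abs] at this
      have hvol : volume.real (Ioc (0:ℝ) ε) = ε := by
        rw [Measure.real, Real.volume_Ioc, ENNReal.toReal_ofReal (by linarith)]
        ring
      rw [hvol] at this
      calc |∫ s in Ioc 0 ε, f s| ≤ 1 / b ^ 2 * ε := this
        _ = ε / b ^ 2 := by ring
    · intro s hs
      have hs0 : 0 < s := hs.1
      rw [Real.norm_eq_abs, abs_of_nonneg (hf_nonneg s hs0)]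
      rw [hf_def, div_le_div_iff₀ (by positivity) (by positivity)]
      have := one_sub_exp_neg_le s
      nlinarith
  -- pointwise bound f - g on Ioi ε
  have hfg : ∀ s ∈ Ioi ε, f s - g s ≤ ε ^ 2 / (2 * b ^ 2) * s ^ (-2 : ℝ) := by
    intro s hs
    rw [mem_Ioi] at hs
    have hs0 : 0 < s := hε.trans hs
    set Q := Real.sqrt (ε ^ 2 + s ^ 2) with hQdef
    have hQpos : 0 < Q := Real.sqrt_pos.mpr (by positivity)
    have hQge : s ≤ Q := by
      have h := Real.sqrt_le_sqrt (show s ^ 2 ≤ ε ^ 2 + s ^ 2 by nlinarith)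
      rwa [Real.sqrt_sq hs0.le] at h
    have hQle : Q ≤ s + ε ^ 2 / (2 * s) := by
      have h1 : ε ^ 2 + s ^ 2 ≤ (s + ε ^ 2 / (2 * s)) ^ 2 := by
        have : (s + ε ^ 2 / (2 * s)) ^ 2 = s ^ 2 + ε ^ 2 + (ε ^ 2 / (2 * s)) ^ 2 := by
          field_simp; ring
        nlinarith [sq_nonneg (ε ^ 2 / (2 * s))]
      calc Q ≤ Real.sqrt ((s + ε ^ 2 / (2 * s)) ^ 2) := Real.sqrt_le_sqrt h1
        _ = s + ε ^ 2 / (2 * s) := Real.sqrt_sq (by positivity)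
    set N := 1 - Real.exp (-s) with hNdef
    have hN0 : 0 ≤ N := one_sub_exp_neg_nonneg hs0.le
    have hNs : N ≤ s := one_sub_exp_neg_le s
    have key : f s - g s = N * (Q - s) / (s * Q * (s ^ 2 + b ^ 2)) := by
      simp only [hf_def, hg_def, ← hQdef, ← hNdef]
      field_simp
    rw [key]
    have hrw : ε ^ 2 / (2 * b ^ 2) * s ^ (-2 : ℝ) = (ε ^ 2 / 2) / (s ^ 2 * b ^ 2) := by
      rw [Real.rpow_neg hs0.le, show (2:ℝ) = ((2:ℕ):ℝ) by norm_num, Real.rpow_natCast]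
      field_simp
    rw [hrw]
    apply div_le_div₀ (by positivity) ?_ (by positivity) ?_
    · calc N * (Q - s) ≤ s * (ε ^ 2 / (2 * s)) := by
            apply mul_le_mul hNs (by linarith) (by linarith) hs0.le
        _ = ε ^ 2 / 2 := by field_simp
    · have h1 : s * s ≤ s * Q := mul_le_mul_of_nonneg_left hQge hs0.le
      nlinarith [h1, hs0, hb2, sq_nonneg s, mul_pos hs0 hQpos]
  -- bound on the Ioi ε piece
  have hIoi : (∫ s in Ioi ε, f s) - (∫ s in Ioi ε, g s) ≤ ε / (2 * b ^ 2) := by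
    rw [← integral_sub hf_int hg_int]
    have hmono : (∫ s in Ioi ε, (f s - g s)) ≤
        ∫ s in Ioi ε, ε ^ 2 / (2 * b ^ 2) * s ^ (-2 : ℝ) :=
      setIntegral_mono_on (hf_int.sub hg_int) (hdom.const_mul _) measurableSet_Ioi hfg
    have hval : (∫ s in Ioi ε, ε ^ 2 / (2 * b ^ 2) * s ^ (-2 : ℝ)) = ε / (2 * b ^ 2) := by
      rw [MeasureTheory.integral_const_mul, integral_Ioi_rpow_of_lt (by norm_num) hε]
      rw [show (-2:ℝ) + 1 = -1 by norm_num, Real.rpow_neg_one]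
      field_simp
    linarith
  have hIoi0 : (0:ℝ) ≤ (∫ s in Ioi ε, f s) - (∫ s in Ioi ε, g s) := by
    have := setIntegral_mono_on hg_int hf_int measurableSet_Ioi
      (fun s hs => hg_le_f s (hε.trans hs))
    linarith
  -- assemble
  rw [hsub, hsplit]
  have habs : |(∫ s in Ioi ε, g s) - ((∫ s in Ioc 0 ε, f s) + ∫ s in Ioi ε, f s)| ≤
      ((∫ s in Ioi ε, f s) - ∫ s in Ioi ε, g s) + |∫ s in Ioc 0 ε, f s| := by
    rw [abs_le]
    constructor
    · have := abs_le.mp (le_refl |∫ s in Ioc 0 ε, f s|) |>.1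
      have h2 := neg_abs_le (∫ s in Ioc 0 ε, f s)
      linarith [hIoi0, le_abs_self (∫ s in Ioc 0 ε, f s)]
    · linarith [hIoi0, neg_abs_le (∫ s in Ioc 0 ε, f s), le_abs_self (∫ s in Ioc 0 ε, f s)]
  have hlog : (1:ℝ) ≤ 1 + |Real.log ε| := by linarith [abs_nonneg (Real.log ε)]
  calc |(∫ s in Ioi ε, g s) - ((∫ s in Ioc 0 ε, f s) + ∫ s in Ioi ε, f s)|
      ≤ ((∫ s in Ioi ε, f s) - ∫ s in Ioi ε, g s) + |∫ s in Ioc 0 ε, f s| := habs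
    _ ≤ ε / (2 * b ^ 2) + ε / b ^ 2 := add_le_add hIoi hIoc
    _ ≤ 2 * ε / b ^ 2 := by
        rw [div_add_div _ _ (by positivity) (by positivity),
          div_le_div_iff₀ (by positivity) (by positivity)]
        ring_nf
        nlinarith [mul_pos (mul_pos hε hb2) hb2]
    _ ≤ 2 * ε * (1 + |Real.log ε|) / b ^ 2 := by
        rw [show 2 * ε / b ^ 2 = 2 * ε * 1 / b ^ 2 by ring]
        gcongr
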